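/- For a convex body K in ℝ^n, the normalized difference body (1/D(K))·(K − K) is in Löwner position if and only if conv(D_K), the convex hull of the set of diametrical directions of K, is in Löwner position. -/

import Mathlib

open MeasureTheory Metric Set Pointwise
open scoped RealInnerProductSpace

/-- A convex body: a compact convex set with nonempty interior. -/
def IsConvexBody {n : ℕ} (K : Set (EuclideanSpace ℝ (Fin n))) : Prop :=
  IsCompact K ∧ Convex ℝ K ∧ (interior K).Nonempty


/-- `K` is in Löwner position if `K ⊆ B₂ⁿ` and every ellipsoid (affine image of the unit
ball) containing `K` has volume at least that of the unit ball. -/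
def InLownerPosition {n : ℕ} (K : Set (EuclideanSpace ℝ (Fin n))) : Prop :=
  K ⊆ closedBall 0 1 ∧
  ∀ (A : EuclideanSpace ℝ (Fin n) ≃ₗ[ℝ] EuclideanSpace ℝ (Fin n)) (t : EuclideanSpace ℝ (Fin n)),
    K ⊆ (fun x => A x + t) '' closedBall 0 1 →
    volume (closedBall (0 : EuclideanSpace ℝ (Fin n)) 1) ≤
      volume ((fun x => A x + t) '' closedBall 0 1)

/-- The set of diametrical directions of `K`: unit vectors `u` such that some segment
`x + D(K)·[0,u]` is contained in `K`. -/
def diamDirs {n : ℕ} (K : Set (EuclideanSpace ℝ (Fin n))) :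
    Set (EuclideanSpace ℝ (Fin n)) :=
  {u | ‖u‖ = 1 ∧ ∃ x ∈ K, ∀ t ∈ Icc (0:ℝ) 1, x + (t * Metric.diam K) • u ∈ K}

open Matrix

section Aux

variable {n : ℕ}

local notation "E" => EuclideanSpace ℝ (Fin n)

lemma auxVol (A : E ≃ₗ[ℝ] E) (t : E) :
    volume ((fun x => A x + t) '' closedBall 0 1) =
      ENNReal.ofReal |LinearMap.det (A : E →ₗ[ℝ] E)| *
        volume (closedBall (0 : E) 1) := by
  have h1 : (fun x => A x + t) '' closedBall 0 1
      = (fun y => y + t) '' ((A : E →ₗ[ℝ] E) '' closedBall 0 1) := by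
    rw [Set.image_image]; rfl
  rw [h1, Set.image_add_right, measure_preimage_add_right,
    Measure.addHaar_image_linearMap]


lemma auxZero (S : Set (EuclideanSpace ℝ (Fin 0))) : InLownerPosition S := by
  have hball : (closedBall (0 : EuclideanSpace ℝ (Fin 0)) 1) = univ := by
    apply Set.eq_univ_of_forall
    intro x
    simp [Metric.mem_closedBall, Subsingleton.elim x 0]
  constructor
  · rw [hball]; exact subset_univ _
  · intro A t h
    have himg : (fun x => A x + t) '' closedBall 0 1 = univ := by
      apply Set.eq_univ_of_forall
      intro x
      rcases ((hball ▸ Set.mem_univ (0: EuclideanSpace ℝ (Fin 0))) :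
        (0: EuclideanSpace ℝ (Fin 0)) ∈ closedBall 0 1) with h0
      exact ⟨0, h0, Subsingleton.elim _ _⟩
    rw [himg, hball]

lemma auxLam (L : Set E) (hLc : IsCompact L) (hLB : L ⊆ closedBall 0 1)
    (f : E → ℝ) (hf : Continuous f) (hf0 : ∀ x, 0 ≤ f x) (r : ℝ) (hr : r < 1)
    (hsph : ∀ x ∈ L, ‖x‖ = 1 → f x ≤ r) :
    ∃ lam : ℝ, 0 < lam ∧ lam < 1 ∧
      ∀ x ∈ L, (1 - lam) * ‖x‖ ^ 2 + lam * f x ≤ 1 := by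
  have hn1 : ∀ x ∈ L, ‖x‖ ≤ 1 := fun x hx => mem_closedBall_zero_iff.1 (hLB hx)
  set U : Set E := f ⁻¹' Iio ((1 + r) / 2) with hU
  have hUopen : IsOpen U := (isOpen_Iio).preimage hf
  have hVc : IsCompact (L \ U) := hLc.diff hUopen
  have hUbound : ∀ x ∈ L, x ∈ U → (1:ℝ) - 1 ≤ 0 := by intros; linarith
  -- key: on L \ U, the norm is < 1
  have hVnorm : ∀ x ∈ L \ U, ‖x‖ < 1 := by
    rintro x ⟨hxL, hxU⟩
    rcases lt_or_eq_of_le (hn1 x hxL) with h | h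
    · exact h
    · exfalso
      apply hxU
      have := hsph x hxL h
      simp only [hU, mem_preimage, mem_Iio]
      linarith
  rcases (L \ U).eq_empty_or_nonempty with hV | hV
  · refine ⟨1/2, by norm_num, by norm_num, fun x hx => ?_⟩
    have hxU : x ∈ U := by
      by_contra hc
      exact absurd (Set.mem_diff x |>.2 ⟨hx, hc⟩) (by rw [hV]; exact notMem_empty x)
    have hfx : f x < (1 + r)/2 := hxU
    have h1 : ‖x‖ ^ 2 ≤ 1 := by
      have := hn1 x hx; nlinarith [norm_nonneg x]
    nlinarith
  · obtain ⟨x₀, hx₀V, hx₀max⟩ := hVc.exists_isMaxOn hV (continuous_norm.continuousOn)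
    set m : ℝ := ‖x₀‖ with hm
    have hm1 : m < 1 := hVnorm x₀ hx₀V
    have hm0 : 0 ≤ m := norm_nonneg _
    have hLne : L.Nonempty := ⟨x₀, hx₀V.1⟩
    obtain ⟨z₀, hz₀L, hz₀max⟩ := hLc.exists_isMaxOn hLne hf.continuousOn
    set Cf : ℝ := max (f z₀) 2 with hCf
    have hCf2 : (2:ℝ) ≤ Cf := le_max_right _ _
    have hfCf : ∀ x ∈ L, f x ≤ Cf := fun x hx => le_trans (hz₀max hx) (le_max_left _ _)
    have hden : (0:ℝ) < Cf - m ^ 2 := by nlinarith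
    set lam : ℝ := min (1/2) ((1 - m ^ 2)/(Cf - m ^ 2)) with hlam
    have hlam0 : 0 < lam := by
      apply lt_min (by norm_num)
      apply div_pos (by nlinarith) hden
    have hlam1 : lam < 1 := lt_of_le_of_lt (min_le_left _ _) (by norm_num)
    refine ⟨lam, hlam0, hlam1, fun x hx => ?_⟩
    have hx2 : ‖x‖ ^ 2 ≤ 1 := by have := hn1 x hx; nlinarith [norm_nonneg x]
    by_cases hxU : x ∈ U
    · have hfx : f x < (1 + r)/2 := hxU
      nlinarith
    · have hxV : x ∈ L \ U := ⟨hx, hxU⟩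
      have hxm : ‖x‖ ≤ m := hx₀max hxV
      have hxm2 : ‖x‖ ^ 2 ≤ m ^ 2 := by nlinarith [norm_nonneg x]
      have hfx : f x ≤ Cf := hfCf x hx
      have hlamle : lam ≤ (1 - m ^ 2)/(Cf - m ^ 2) := min_le_right _ _
      have h2 : lam * (Cf - m ^ 2) ≤ 1 - m ^ 2 := by
        rw [← le_div_iff₀ hden] at *; exact hlamle
      nlinarith

lemma auxDot (C : Matrix (Fin n) (Fin n) ℝ) (x : E) :
    ‖Matrix.toEuclideanLin C x‖ ^ 2 =
      ((Cᴴ * C) *ᵥ (WithLp.equiv 2 (Fin n → ℝ) x)) ⬝ᵥ (WithLp.equiv 2 (Fin n → ℝ) x) := by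
  rw [← real_inner_self_eq_norm_sq]
  rw [EuclideanSpace.inner_eq_star_dotProduct]
  simp only [WithLp.equiv_apply, piLp_ofLp_toEuclideanLin, star_trivial, Matrix.toLin'_apply]
  conv_rhs => rw [Matrix.conjTranspose_eq_transpose_of_trivial, ← Matrix.mulVec_mulVec,
    dotProduct_comm, Matrix.dotProduct_mulVec, Matrix.vecMul_transpose]

lemma auxQuad (C M : Matrix (Fin n) (Fin n) ℝ) (a b : ℝ)
    (h : Cᴴ * C = a • (1 : Matrix (Fin n) (Fin n) ℝ) + b • (Mᴴ * M)) (x : E) :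
    ‖Matrix.toEuclideanLin C x‖ ^ 2 =
      a * ‖x‖ ^ 2 + b * ‖Matrix.toEuclideanLin M x‖ ^ 2 := by
  have hx2 : ‖x‖ ^ 2 = (WithLp.equiv 2 (Fin n → ℝ) x) ⬝ᵥ (WithLp.equiv 2 (Fin n → ℝ) x) := by
    rw [← real_inner_self_eq_norm_sq, EuclideanSpace.inner_eq_star_dotProduct, star_trivial, WithLp.equiv_apply]
  rw [auxDot, auxDot, h, hx2]
  simp [Matrix.add_mulVec, Matrix.smul_mulVec, add_dotProduct,
    smul_dotProduct, Matrix.one_mulVec]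

lemma auxKey (L : Set E) (hLc : IsCompact L) (hLB : L ⊆ closedBall 0 1)
    (M : Matrix (Fin n) (Fin n) ℝ) (r : ℝ) (hr : r < 1) (hdet : 1 < |M.det|)
    (hsph : ∀ x ∈ L, ‖x‖ = 1 → ‖Matrix.toEuclideanLin M x‖ ^ 2 ≤ r) :
    ∃ A : E ≃ₗ[ℝ] E, (L ⊆ (fun x => A x + 0) '' closedBall 0 1) ∧
      |LinearMap.det (A : E →ₗ[ℝ] E)| < 1 := by
  have hfcont : Continuous fun x : E => ‖Matrix.toEuclideanLin M x‖ ^ 2 :=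
    ((Matrix.toEuclideanLin M).continuous_of_finiteDimensional.norm.pow 2)
  obtain ⟨lam, hlam0, hlam1, hlam⟩ :=
    auxLam L hLc hLB _ hfcont (fun x => by positivity) r hr hsph
  set S := Mᴴ * M with hSdef
  have hHerm : S.IsHermitian := Matrix.isHermitian_conjTranspose_mul_self M
  set s : Fin n → ℝ := hHerm.eigenvalues with hs
  have hs0 : ∀ i, 0 ≤ s i := fun i => Matrix.eigenvalues_conjTranspose_mul_self_nonneg M i
  have hprod : ∏ i, s i = M.det ^ 2 := by
    have h1 := hHerm.det_eq_prod_eigenvalues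
    rw [Matrix.det_mul, Matrix.det_conjTranspose, star_trivial, ← sq] at h1
    rw [h1]
    simp [RCLike.ofReal_real_eq_id, hs]
  set U : Matrix (Fin n) (Fin n) ℝ := (hHerm.eigenvectorUnitary : Matrix (Fin n) (Fin n) ℝ) with hUdef
  have hUl : star U * U = 1 := (Unitary.mem_iff.mp hHerm.eigenvectorUnitary.2).1
  have hUr : U * star U = 1 := (Unitary.mem_iff.mp hHerm.eigenvectorUnitary.2).2
  have hSd : S = U * Matrix.diagonal s * star U := by
    have := hHerm.spectral_theorem
    rwa [RCLike.ofReal_real_eq_id, Function.id_comp] at this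
  set g : Fin n → ℝ := fun i => Real.sqrt ((1 - lam) + lam * s i) with hg
  have hgpos : ∀ i, 0 < (1 - lam) + lam * s i := fun i => by nlinarith [hs0 i]
  set C := Matrix.diagonal g * star U with hC
  have hCH : Cᴴ = U * Matrix.diagonal g := by
    rw [hC, ← Matrix.star_eq_conjTranspose, Matrix.star_mul, star_star]
    congr 1
    simp [Matrix.star_eq_conjTranspose, Matrix.diagonal_conjTranspose]
  have hCC : Cᴴ * C = (1 - lam) • (1 : Matrix (Fin n) (Fin n) ℝ) + lam • S := by
    rw [hCH, hC]
    have hGG : Matrix.diagonal g * Matrix.diagonal g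
        = Matrix.diagonal (fun i => (1 - lam) + lam * s i) := by
      rw [Matrix.diagonal_mul_diagonal]
      have hfun : (fun i => g i * g i) = fun i => (1 - lam) + lam * s i := by
        funext i
        exact Real.mul_self_sqrt (hgpos i).le
      rw [hfun]
    have hsplit : Matrix.diagonal (fun i => (1 - lam) + lam * s i)
        = (1 - lam) • (1 : Matrix (Fin n) (Fin n) ℝ) + lam • Matrix.diagonal s := by
      ext i j
      by_cases h : i = j <;>
        simp [Matrix.diagonal_apply, Matrix.add_apply, Matrix.smul_apply, Matrix.one_apply, h,
          smul_eq_mul]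
    calc U * Matrix.diagonal g * (Matrix.diagonal g * star U)
        = U * (Matrix.diagonal g * Matrix.diagonal g) * star U := by
          simp only [mul_assoc]
      _ = U * ((1 - lam) • (1 : Matrix (Fin n) (Fin n) ℝ) + lam • Matrix.diagonal s) * star U := by
          rw [hGG, hsplit]
      _ = (1 - lam) • (U * 1 * star U) + lam • (U * Matrix.diagonal s * star U) := by
          simp only [mul_add, add_mul, mul_smul_comm, smul_mul_assoc]
      _ = (1 - lam) • (1 : Matrix (Fin n) (Fin n) ℝ) + lam • S := by
          rw [mul_one, hUr, hSd]
  -- determinant of C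
  have habsU : |U.det| = 1 := by
    have h1 : (star U).det * U.det = 1 := by rw [← Matrix.det_mul, hUl, Matrix.det_one]
    have h2 : (star U).det = U.det := by
      rw [Matrix.star_eq_conjTranspose, Matrix.det_conjTranspose, star_trivial]
    rw [h2] at h1
    rcases mul_self_eq_one_iff.mp h1 with h | h <;> rw [h] <;> norm_num
  have hdetC : |C.det| = ∏ i, g i := by
    rw [hC, Matrix.det_mul, Matrix.det_diagonal, abs_mul]
    have h2 : |(star U).det| = 1 := by
      rw [Matrix.star_eq_conjTranspose, Matrix.det_conjTranspose, star_trivial]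
      exact habsU
    rw [h2, mul_one, abs_of_nonneg (Finset.prod_nonneg fun i _ => Real.sqrt_nonneg _)]
  -- product bound
  have hg2 : (∏ i, g i) ^ 2 = ∏ i, ((1 - lam) + lam * s i) := by
    rw [← Finset.prod_pow]
    congr 1
    funext i
    rw [sq]
    exact Real.mul_self_sqrt (hgpos i).le
  have hgeo : ∀ i, s i ^ lam ≤ (1 - lam) + lam * s i := by
    intro i
    have h := Real.geom_mean_le_arith_mean2_weighted (by linarith : (0:ℝ) ≤ 1 - lam)
      hlam0.le zero_le_one (hs0 i) (by ring)
    simpa using h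
  have hdM2 : (1:ℝ) < M.det ^ 2 := by nlinarith [sq_abs M.det]
  have hp1 : (1:ℝ) < (∏ i, s i) ^ lam := by
    rw [hprod]
    exact (Real.one_lt_rpow_iff_of_pos (by linarith)).2 (Or.inl ⟨hdM2, hlam0⟩)
  have hge : (∏ i, s i) ^ lam ≤ ∏ i, ((1 - lam) + lam * s i) := by
    rw [← Real.finset_prod_rpow _ _ (fun i _ => hs0 i) lam]
    exact Finset.prod_le_prod (fun i _ => Real.rpow_nonneg (hs0 i) lam) (fun i _ => hgeo i)
  have hprodg1 : 1 < ∏ i, g i := by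
    have h2 : 1 < (∏ i, g i) ^ 2 := by rw [hg2]; linarith
    nlinarith [Finset.prod_nonneg (fun i (_ : i ∈ Finset.univ) => Real.sqrt_nonneg
      ((1 - lam) + lam * s i))]
  have hdetC1 : 1 < |C.det| := by rw [hdetC]; exact hprodg1
  have hdetC0 : IsUnit C.det := by
    apply isUnit_iff_ne_zero.mpr
    intro h
    rw [h] at hdetC1
    norm_num at hdetC1
  have hCinv : C⁻¹ * C = 1 := Matrix.nonsing_inv_mul C hdetC0
  have hCinv' : C * C⁻¹ = 1 := Matrix.mul_nonsing_inv C hdetC0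
  have hco1 : (Matrix.toEuclideanLin C⁻¹).comp (Matrix.toEuclideanLin C) = LinearMap.id := by
    rw [Matrix.toEuclideanLin_eq_toLin, ← Matrix.toLin_mul, hCinv, Matrix.toLin_one]
  have hco2 : (Matrix.toEuclideanLin C).comp (Matrix.toEuclideanLin C⁻¹) = LinearMap.id := by
    rw [Matrix.toEuclideanLin_eq_toLin, ← Matrix.toLin_mul, hCinv', Matrix.toLin_one]
  refine ⟨LinearEquiv.ofLinear (Matrix.toEuclideanLin C⁻¹) (Matrix.toEuclideanLin C) hco1 hco2,
    ?_, ?_⟩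
  · intro x hx
    refine ⟨Matrix.toEuclideanLin C x, ?_, ?_⟩
    · rw [mem_closedBall_zero_iff]
      have hq := auxQuad C M (1 - lam) lam hCC x
      have hle := hlam x hx
      nlinarith [norm_nonneg (Matrix.toEuclideanLin C x)]
    · show (LinearEquiv.ofLinear (Matrix.toEuclideanLin C⁻¹) (Matrix.toEuclideanLin C) hco1 hco2)
        (Matrix.toEuclideanLin C x) + 0 = x
      rw [add_zero, LinearEquiv.ofLinear_apply]
      exact DFunLike.congr_fun hco1 x
  · have hcoe : ((LinearEquiv.ofLinear (Matrix.toEuclideanLin C⁻¹) (Matrix.toEuclideanLin C)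
        hco1 hco2 : E ≃ₗ[ℝ] E) : E →ₗ[ℝ] E) = Matrix.toEuclideanLin C⁻¹ := rfl
    rw [hcoe, Matrix.toEuclideanLin_eq_toLin, LinearMap.det_toLin, Matrix.det_nonsing_inv,
      Ring.inverse_eq_inv, abs_inv]
    exact inv_lt_one_of_one_lt₀ hdetC1

end Aux

/-- The normalized difference body `(1/D(K))·(K - K)` is in Löwner position iff the
convex hull of the set of diametrical directions of `K` is in Löwner position. -/
theorem normalized_difference_lowner_iff_diamDirs_hull_lowner {n : ℕ}
    (K : Set (EuclideanSpace ℝ (Fin n))) (hK : IsConvexBody K) :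
    InLownerPosition ((Metric.diam K)⁻¹ • (K - K)) ↔
      InLownerPosition (convexHull ℝ (diamDirs K)) := by
  rcases Nat.eq_zero_or_pos n with hn | hn
  · subst hn
    exact ⟨fun _ => auxZero _, fun _ => auxZero _⟩
  obtain ⟨hKc, hKconv, hKint⟩ := hK
  have hKne : K.Nonempty := hKint.mono interior_subset
  -- the diameter is positive
  have hdK : 0 < Metric.diam K := by
    obtain ⟨x, hx⟩ := hKint
    rw [mem_interior_iff_mem_nhds, Metric.mem_nhds_iff] at hx
    obtain ⟨ε, hε, hball⟩ := hx
    haveI : Nonempty (Fin n) := ⟨⟨0, hn⟩⟩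
    obtain ⟨v, hv⟩ := exists_ne (0 : EuclideanSpace ℝ (Fin n))
    have hv0 : 0 < ‖v‖ := norm_pos_iff.2 hv
    set y := x + (ε / (2 * ‖v‖)) • v with hy
    have hyball : y ∈ ball x ε := by
      rw [mem_ball, hy, dist_self_add_left, norm_smul, Real.norm_eq_abs,
        abs_of_pos (by positivity)]
      have h1 : ε / (2 * ‖v‖) * ‖v‖ = ε / 2 := by
        field_simp
      rw [h1]
      linarith
    have hyK : y ∈ K := hball hyball
    have hxK : x ∈ K := hball (mem_ball_self hε)
    have hdist : dist y x = ε / 2 := by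
      rw [hy, dist_self_add_left, norm_smul, Real.norm_eq_abs, abs_of_pos (by positivity)]
      field_simp
    have := dist_le_diam_of_mem hKc.isBounded hyK hxK
    rw [hdist] at this
    linarith
  set dK := Metric.diam K with hdKdef
  set L : Set (EuclideanSpace ℝ (Fin n)) := dK⁻¹ • (K - K) with hL
  have hLconv : Convex ℝ L := (hKconv.sub hKconv).smul _
  have hLcomp : IsCompact L := by
    have h1 : IsCompact (K - K) := by
      have h2 := (hKc.prod hKc).image
        ((continuous_fst.sub continuous_snd : Continuous fun p : EuclideanSpace ℝ (Fin n) × EuclideanSpace ℝ (Fin n) => p.1 - p.2))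
      rwa [show (Prod.fst - Prod.snd : EuclideanSpace ℝ (Fin n) × EuclideanSpace ℝ (Fin n) → EuclideanSpace ℝ (Fin n)) = fun p => p.1 - p.2 from rfl, Set.sub_image_prod] at h2
    rw [hL, ← Set.image_smul]
    exact h1.image (continuous_const_smul _)
  have hLB : L ⊆ closedBall 0 1 := by
    intro z hz
    rw [hL, Set.mem_smul_set] at hz
    obtain ⟨y, hy, rfl⟩ := hz
    rw [Set.mem_sub] at hy
    obtain ⟨a, ha, b, hb, rfl⟩ := hy
    rw [mem_closedBall_zero_iff, norm_smul, Real.norm_eq_abs, abs_inv, abs_of_pos hdK]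
    have h1 : ‖a - b‖ ≤ dK := by
      rw [← dist_eq_norm]
      exact dist_le_diam_of_mem hKc.isBounded ha hb
    calc dK⁻¹ * ‖a - b‖ ≤ dK⁻¹ * dK :=
          mul_le_mul_of_nonneg_left h1 (by positivity)
      _ = 1 := inv_mul_cancel₀ hdK.ne'
  have hDsub : diamDirs K ⊆ L := by
    rintro u ⟨hu1, x, hx, hseg⟩
    have h1 : x + (1 * dK) • u ∈ K := hseg 1 ⟨zero_le_one, le_refl 1⟩
    rw [hL, Set.mem_smul_set]
    refine ⟨(x + (1 * dK) • u) - x, Set.sub_mem_sub h1 hx, ?_⟩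
    have h2 : (x + (1 * dK) • u) - x = dK • u := by
      rw [one_mul]; abel
    rw [h2, smul_smul, inv_mul_cancel₀ hdK.ne', one_smul]
  have hNeg : ∀ u ∈ diamDirs K, -u ∈ diamDirs K := by
    rintro u ⟨hu1, x, hx, hseg⟩
    refine ⟨by rw [norm_neg]; exact hu1, x + (1 * dK) • u,
      hseg 1 ⟨zero_le_one, le_refl 1⟩, fun t ht => ?_⟩
    have hcomp : x + (1 * dK) • u + (t * dK) • (-u) = x + ((1 - t) * dK) • u := by
      rw [smul_neg]
      have h3 : (1 - t) * dK = 1 * dK - t * dK := by ring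
      rw [h3, sub_smul]
      abel
    rw [hcomp]
    exact hseg (1 - t) ⟨by linarith [ht.2], by linarith [ht.1]⟩
  have hSphere : ∀ x ∈ L, ‖x‖ = 1 → x ∈ diamDirs K := by
    intro z hz hz1
    rw [hL, Set.mem_smul_set] at hz
    obtain ⟨y, hy, rfl⟩ := hz
    rw [Set.mem_sub] at hy
    obtain ⟨a, ha, b, hb, rfl⟩ := hy
    refine ⟨hz1, b, hb, fun t ht => ?_⟩
    have h1 : b + (t * dK) • (dK⁻¹ • (a - b)) = (1 - t) • b + t • a := by
      rw [smul_smul]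
      have h2 : t * dK * dK⁻¹ = t := by field_simp
      rw [h2, smul_sub, sub_smul, one_smul]
      abel
    rw [h1]
    exact hKconv hb ha (by linarith [ht.2]) ht.1 (by ring)
  have hconvL : convexHull ℝ (diamDirs K) ⊆ L := convexHull_min hDsub hLconv
  constructor
  · -- forward direction
    intro hyp
    refine ⟨convexHull_min (fun u hu => mem_closedBall_zero_iff.2 (le_of_eq hu.1))
      (convex_closedBall 0 1), ?_⟩
    intro A t hsub
    rw [auxVol A t]
    set d := |LinearMap.det (A : EuclideanSpace ℝ (Fin n) →ₗ[ℝ] EuclideanSpace ℝ (Fin n))| with hd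
    rcases le_or_gt 1 d with hge | hdetlt
    · exact le_mul_of_one_le_left (zero_le) (ENNReal.one_le_ofReal.2 hge)
    exfalso
    have hd0 : 0 < d := abs_pos.2 (LinearEquiv.isUnit_det' A).ne_zero
    -- by symmetry we can center the ellipsoid
    have hsymm : ∀ u ∈ diamDirs K, ‖A.symm u‖ ≤ 1 := by
      intro u hu
      obtain ⟨y1, hy1, hAy1⟩ := hsub (subset_convexHull ℝ _ hu)
      obtain ⟨y2, hy2, hAy2⟩ := hsub (subset_convexHull ℝ _ (hNeg u hu))
      have hAy1' : A y1 + t = u := hAy1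
      have hAy2' : A y2 + t = -u := hAy2
      have key : A ((1/2 : ℝ) • (y1 - y2)) = u := by
        have e1 : A y1 = u - t := eq_sub_of_add_eq hAy1'
        have e2 : A y2 = -u - t := eq_sub_of_add_eq hAy2'
        rw [_root_.map_smul, map_sub, e1, e2]
        have h4 : (u - t) - (-u - t) = (2:ℝ) • u := by
          rw [two_smul]; abel
        rw [h4, smul_smul]
        norm_num
      have h5 : A.symm u = (1/2 : ℝ) • (y1 - y2) := by
        rw [← key, LinearEquiv.symm_apply_apply]
      rw [h5, norm_smul, Real.norm_eq_abs]
      have n1 : ‖y1‖ ≤ 1 := mem_closedBall_zero_iff.1 hy1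
      have n2 : ‖y2‖ ≤ 1 := mem_closedBall_zero_iff.1 hy2
      have n3 : ‖y1 - y2‖ ≤ 2 := le_trans (norm_sub_le _ _) (by linarith)
      rw [abs_of_pos (by norm_num : (0:ℝ) < 1/2)]
      linarith
    -- scaling constant
    have hdinv1 : 1 < d⁻¹ := (one_lt_inv₀ hd0).2 hdetlt
    have h2n : (0:ℝ) < 2 * n := by
      have : (0:ℝ) < (n:ℝ) := by exact_mod_cast hn
      linarith
    set c : ℝ := (d⁻¹) ^ ((1:ℝ) / (2 * n)) with hc
    have hc1 : 1 < c :=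
      (Real.one_lt_rpow_iff_of_pos (by positivity)).2 (Or.inl ⟨hdinv1, by positivity⟩)
    have hc0 : 0 < c := lt_trans one_pos hc1
    -- the matrix
    set f : EuclideanSpace ℝ (Fin n) →ₗ[ℝ] EuclideanSpace ℝ (Fin n) := c⁻¹ • (A.symm : EuclideanSpace ℝ (Fin n) →ₗ[ℝ] EuclideanSpace ℝ (Fin n)) with hf
    obtain ⟨M, hMf⟩ : ∃ M : Matrix (Fin n) (Fin n) ℝ, Matrix.toEuclideanLin M = f :=
      ⟨Matrix.toEuclideanLin.symm f, Matrix.toEuclideanLin.apply_symm_apply f⟩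
    have hdetsymm : LinearMap.det (A.symm : EuclideanSpace ℝ (Fin n) →ₗ[ℝ] EuclideanSpace ℝ (Fin n)) = (LinearMap.det (A : EuclideanSpace ℝ (Fin n) →ₗ[ℝ] EuclideanSpace ℝ (Fin n)))⁻¹ := by
      apply eq_inv_of_mul_eq_one_left
      rw [← LinearMap.det_comp]
      have hcomp : (A.symm : EuclideanSpace ℝ (Fin n) →ₗ[ℝ] EuclideanSpace ℝ (Fin n)) ∘ₗ (A : EuclideanSpace ℝ (Fin n) →ₗ[ℝ] EuclideanSpace ℝ (Fin n)) = LinearMap.id := by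
        ext x
        simp
      rw [hcomp, LinearMap.det_id]
    have hdetM : |M.det| = c⁻¹ ^ n * d⁻¹ := by
      have h1 : LinearMap.det f = M.det := by
        rw [← hMf, Matrix.toEuclideanLin_eq_toLin, LinearMap.det_toLin]
      have h2 : LinearMap.det f = c⁻¹ ^ n * LinearMap.det (A.symm : EuclideanSpace ℝ (Fin n) →ₗ[ℝ] EuclideanSpace ℝ (Fin n)) := by
        rw [hf, LinearMap.det_smul, finrank_euclideanSpace_fin]
      rw [← h1, h2, abs_mul, abs_pow, abs_inv, abs_of_pos hc0, hdetsymm, abs_inv, ← hd]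
    have hcn : c ^ n < d⁻¹ := by
      have h1 : c ^ n = (d⁻¹) ^ (((1:ℝ) / (2 * n)) * n) := by
        rw [Real.rpow_mul (by positivity), Real.rpow_natCast]
      have h2 : ((1:ℝ) / (2 * n)) * n = 1/2 := by
        field_simp
      rw [h1, h2]
      calc (d⁻¹) ^ ((1:ℝ)/2) < (d⁻¹) ^ (1:ℝ) :=
            Real.rpow_lt_rpow_of_exponent_lt hdinv1 (by norm_num)
        _ = d⁻¹ := Real.rpow_one _
    have hdetM1 : 1 < |M.det| := by
      rw [hdetM, inv_pow, ← mul_inv]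
      have hxd : c ^ n * d < 1 := by
        have h6 := mul_lt_mul_of_pos_right hcn hd0
        rwa [inv_mul_cancel₀ hd0.ne'] at h6
      have hpos : 0 < c ^ n * d := by positivity
      exact (one_lt_inv₀ hpos).2 hxd
    have hrlt : c⁻¹ ^ 2 < 1 := by
      have h7 : 1 < c ^ 2 := by nlinarith
      rw [inv_pow]
      exact inv_lt_one_of_one_lt₀ h7
    have hMbound : ∀ x ∈ L, ‖x‖ = 1 → ‖Matrix.toEuclideanLin M x‖ ^ 2 ≤ c⁻¹ ^ 2 := by
      intro x hx hx1
      have hu := hSphere x hx hx1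
      rw [hMf]
      have happ : f x = c⁻¹ • (A.symm x) := rfl
      rw [happ, norm_smul, Real.norm_eq_abs, abs_inv, abs_of_pos hc0]
      have h8 := hsymm x hu
      have h9 : (0:ℝ) ≤ c⁻¹ := by positivity
      have h10 : (c⁻¹ * ‖A.symm x‖) ^ 2 = c⁻¹ ^ 2 * ‖A.symm x‖ ^ 2 := by ring
      have h11 : ‖A.symm x‖ ^ 2 ≤ 1 := pow_le_one₀ (norm_nonneg _) h8
      rw [h10]
      have h12 := mul_le_mul_of_nonneg_left h11 (sq_nonneg c⁻¹)
      simpa using h12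
    obtain ⟨A2, hA2sub, hA2det⟩ := auxKey L hLcomp hLB M (c⁻¹ ^ 2) hrlt hdetM1 hMbound
    have hle := hyp.2 A2 0 hA2sub
    rw [auxVol A2 0] at hle
    have hvol0 : volume (closedBall (0:EuclideanSpace ℝ (Fin n)) 1) ≠ 0 :=
      (measure_closedBall_pos volume 0 one_pos).ne'
    have hvolt : volume (closedBall (0:EuclideanSpace ℝ (Fin n)) 1) ≠ ⊤ := measure_closedBall_lt_top.ne
    have hlt : ENNReal.ofReal |LinearMap.det (A2 : EuclideanSpace ℝ (Fin n) →ₗ[ℝ] EuclideanSpace ℝ (Fin n))| *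
        volume (closedBall (0:EuclideanSpace ℝ (Fin n)) 1) < volume (closedBall (0:EuclideanSpace ℝ (Fin n)) 1) := by
      have h10 : ENNReal.ofReal |LinearMap.det (A2 : EuclideanSpace ℝ (Fin n) →ₗ[ℝ] EuclideanSpace ℝ (Fin n))| < 1 :=
        ENNReal.ofReal_lt_one.2 hA2det
      calc ENNReal.ofReal |LinearMap.det (A2 : EuclideanSpace ℝ (Fin n) →ₗ[ℝ] EuclideanSpace ℝ (Fin n))| * volume (closedBall (0:EuclideanSpace ℝ (Fin n)) 1)
          < 1 * volume (closedBall (0:EuclideanSpace ℝ (Fin n)) 1) :=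
            (ENNReal.mul_lt_mul_iff_left hvol0 hvolt).2 h10
        _ = volume (closedBall (0:EuclideanSpace ℝ (Fin n)) 1) := one_mul _
    exact absurd hle hlt.not_ge
  · intro hyp
    exact ⟨hLB, fun A t h => hyp.2 A t (subset_trans hconvL h)⟩
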